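/- In any packing of a list of items by the Best-Fit algorithm, at any point in time, there are at most 2 bins that contain no item of size greater than 1/2 and have load at most 2/3. -/
import Mathlib


open scoped Classical

/-- One step of Best-Fit: the item `x` is placed into a fullest bin where it fits,
and a new bin is opened only if it fits nowhere. Bins are represented by the lists of
(sizes of) items they contain. -/
inductive BFStep : List (List ℝ) → ℝ → List (List ℝ) → Prop where
  | place (l₁ l₂ : List (List ℝ)) (b : List ℝ) (x : ℝ)
      (hfit : b.sum + x ≤ 1)
      (hmax : ∀ b' ∈ l₁ ++ b :: l₂, b'.sum + x ≤ 1 → b'.sum ≤ b.sum) :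
      BFStep (l₁ ++ b :: l₂) x (l₁ ++ (x :: b) :: l₂)
  | new (bins : List (List ℝ)) (x : ℝ)
      (hno : ∀ b ∈ bins, ¬ (b.sum + x ≤ 1)) :
      BFStep bins x ([x] :: bins)

/-- `BFReaches items bins`: processing the list `items` (in order) from the empty
configuration by Best-Fit can yield the configuration `bins`. -/
inductive BFReaches : List ℝ → List (List ℝ) → Prop where
  | nil : BFReaches [] []
  | cons (items : List ℝ) (x : ℝ) (s t : List (List ℝ)) :
      BFReaches items s → BFStep s x t → BFReaches (items ++ [x]) t

namespace BFAux

noncomputable def sp : List ℝ → Bool :=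
  fun b => decide ((∀ y ∈ b, y ≤ (1:ℝ)/2) ∧ b.sum ≤ 2/3)

lemma sp_iff (b : List ℝ) :
    sp b = true ↔ ((∀ y ∈ b, y ≤ (1:ℝ)/2) ∧ b.sum ≤ 2/3) := by
  simp [sp]

lemma sp_tail {x : ℝ} {b : List ℝ} (hx : 0 < x) (h : sp (x :: b) = true) :
    sp b = true := by
  rw [sp_iff] at h ⊢
  obtain ⟨h1, h2⟩ := h
  refine ⟨fun y hy => h1 y (List.mem_cons_of_mem _ hy), ?_⟩
  simp only [List.sum_cons] at h2
  linarith

def Inv (bins : List (List ℝ)) : Prop :=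
  bins.filter sp = [] ∨ (∃ b, bins.filter sp = [b]) ∨
    ∃ x b', bins.filter sp = [[x], b'] ∧ x ≤ 1/2 ∧ 1 - x < b'.sum

lemma main {items : List ℝ} {bins : List (List ℝ)} (h : BFReaches items bins)
    (hpos : ∀ x ∈ items, 0 < x) : Inv bins := by
  induction h with
  | nil => left; rfl
  | cons items x s t hs hstep ih =>
    have hx : 0 < x := hpos x (by simp)
    have hIs : Inv s := ih (fun y hy => hpos y (List.mem_append_left _ hy))
    cases hstep with
    | place l₁ l₂ b x hfit hmax =>
      by_cases hxb : sp (x :: b) = true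
      · have hb : sp b = true := sp_tail hx hxb
        have e1 : (l₁ ++ b :: l₂).filter sp = l₁.filter sp ++ b :: l₂.filter sp := by
          simp [List.filter_append, List.filter_cons, hb]
        have e2 : (l₁ ++ (x :: b) :: l₂).filter sp
            = l₁.filter sp ++ (x :: b) :: l₂.filter sp := by
          simp [List.filter_append, List.filter_cons, hxb]
        rw [Inv, e2]
        rw [Inv, e1] at hIs
        rcases hIs with h0 | ⟨b0, h1⟩ | ⟨x0, b', h2, hx0, hb'⟩
        · exact absurd h0 (by simp)
        · rcases hA : l₁.filter sp with _ | ⟨a, A'⟩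
          · rw [hA] at h1
            simp only [List.nil_append, List.cons.injEq] at h1
            right; left; exact ⟨x :: b, by simp [h1.2]⟩
          · rw [hA] at h1
            simp only [List.cons_append, List.cons.injEq] at h1
            exact absurd h1.2 (by simp)
        · rcases hA : l₁.filter sp with _ | ⟨a, A'⟩
          · -- b = [x0], l₂.filter sp = [b'] : contradiction via hmax
            exfalso
            rw [hA] at h2
            simp only [List.nil_append, List.cons.injEq] at h2
            obtain ⟨hbx0, hB⟩ := h2
            have hB' : l₂.filter sp = [b'] := by
              cases hB' : l₂.filter sp with
              | nil => rw [hB'] at hB; simp at hB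
              | cons c C =>
                rw [hB'] at hB
                simp only [List.cons.injEq] at hB
                rw [hB.1, hB.2]
            have hb'mem : b' ∈ l₂ := by
              have : b' ∈ l₂.filter sp := by rw [hB']; simp
              exact List.mem_of_mem_filter this
            have hb'sp : sp b' = true := by
              have : b' ∈ l₂.filter sp := by rw [hB']; simp
              exact List.of_mem_filter this
            have hb'small := (sp_iff b').1 hb'sp
            have hxbsmall := (sp_iff (x :: b)).1 hxb
            have hsum : x + x0 ≤ 2/3 := by
              have := hxbsmall.2
              rw [hbx0] at this
              simp only [List.sum_cons, List.sum_nil] at this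
              linarith
            have hx0big : 1/3 < x0 := by linarith [hb'small.2]
            have hfit2 : b'.sum + x ≤ 1 := by linarith [hb'small.2]
            have hle : b'.sum ≤ b.sum :=
              hmax b' (List.mem_append_right _ (List.mem_cons_of_mem _ hb'mem)) hfit2
            rw [hbx0] at hle
            simp only [List.sum_cons, List.sum_nil] at hle
            linarith
          · -- l₁.filter sp = [[x0]], b = b', l₂.filter sp = []
            rw [hA] at h2
            simp only [List.cons_append, List.cons.injEq] at h2
            obtain ⟨hax0, hrest⟩ := h2
            have hA' : A' = [] ∧ b = b' ∧ l₂.filter sp = [] := by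
              cases A' with
              | nil =>
                simp only [List.nil_append, List.cons.injEq] at hrest
                exact ⟨rfl, hrest.1, hrest.2⟩
              | cons a2 A'' =>
                simp only [List.cons_append, List.cons.injEq] at hrest
                exact absurd hrest.2 (by simp)
            right; right
            refine ⟨x0, x :: b, by simp [hax0, hA'.1, hA'.2.2], hx0, ?_⟩
            simp only [List.sum_cons]
            rw [hA'.2.1]
            linarith
      · by_cases hb : sp b = true
        · have e1 : (l₁ ++ b :: l₂).filter sp = l₁.filter sp ++ b :: l₂.filter sp := by
            simp [List.filter_append, List.filter_cons, hb]
          have e2 : (l₁ ++ (x :: b) :: l₂).filter sp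
              = l₁.filter sp ++ l₂.filter sp := by
            simp [List.filter_append, List.filter_cons, hxb]
          rw [Inv, e2]
          rw [Inv, e1] at hIs
          rcases hIs with h0 | ⟨b0, h1⟩ | ⟨x0, b', h2, hx0, hb'⟩
          · exact absurd h0 (by simp)
          · have hlen : (l₁.filter sp).length + (l₂.filter sp).length = 0 := by
              have := congrArg List.length h1
              simp at this
              omega
            left
            rw [List.length_eq_zero_iff.1 (by omega : (l₁.filter sp).length = 0),
              List.length_eq_zero_iff.1 (by omega : (l₂.filter sp).length = 0)]
            rfl
          · have hlen : (l₁.filter sp).length + (l₂.filter sp).length = 1 := by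
              have := congrArg List.length h2
              simp at this
              omega
            right; left
            have : (l₁.filter sp ++ l₂.filter sp).length = 1 := by
              simp [hlen]
            exact List.length_eq_one_iff.1 this
        · have e1 : (l₁ ++ b :: l₂).filter sp = l₁.filter sp ++ l₂.filter sp := by
            simp [List.filter_append, List.filter_cons, hb]
          have e2 : (l₁ ++ (x :: b) :: l₂).filter sp
              = l₁.filter sp ++ l₂.filter sp := by
            simp [List.filter_append, List.filter_cons, hxb]
          rw [Inv, e2]
          rw [Inv, e1] at hIs
          exact hIs
    | new _ _ hno =>
      by_cases hX : sp [x] = true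
      · have e : ([x] :: s).filter sp = [x] :: s.filter sp := by
          simp [List.filter_cons, hX]
        have hx2 : x ≤ 1/2 := ((sp_iff _).1 hX).1 x (by simp)
        rw [Inv, e]
        rcases hIs with h0 | ⟨b0, h1⟩ | ⟨x0, b', h2, hx0, hb'⟩
        · rw [h0]; right; left; exact ⟨[x], rfl⟩
        · rw [h1]; right; right
          refine ⟨x, b0, rfl, hx2, ?_⟩
          have hb0 : b0 ∈ s := by
            have : b0 ∈ s.filter sp := by rw [h1]; simp
            exact List.mem_of_mem_filter this
          have := hno b0 hb0
          push_neg at this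
          linarith
        · exfalso
          have hmem : [x0] ∈ s := by
            have : [x0] ∈ s.filter sp := by rw [h2]; simp
            exact List.mem_of_mem_filter this
          have := hno [x0] hmem
          push_neg at this
          simp only [List.sum_cons, List.sum_nil, add_zero] at this
          linarith
      · have e : ([x] :: s).filter sp = s.filter sp := by
          simp [List.filter_cons, hX]
        rw [Inv, e]
        exact hIs

end BFAux

/-- In any Best-Fit packing, at any point in time, there are at most 2 bins that contain
no item of size greater than 1/2 and have load at most 2/3. -/
theorem stmt2 (items : List ℝ) (hitems : ∀ x ∈ items, 0 < x ∧ x ≤ 1)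
    (bins : List (List ℝ)) (h : BFReaches items bins) :
    (bins.filter (fun b => decide ((∀ y ∈ b, y ≤ (1:ℝ)/2) ∧ b.sum ≤ 2/3))).length ≤ 2 := by
  have hI := BFAux.main h (fun x hx => (hitems x hx).1)
  show (bins.filter BFAux.sp).length ≤ 2
  rcases hI with h0 | ⟨b0, h1⟩ | ⟨x0, b', h2, _, _⟩
  · rw [h0]; simp
  · rw [h1]; simp
  · rw [h2]; simp
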